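/- Let S be a finite regular semigroup and let k ≥ 1 be an integer. Then S satisfies the identity x = x^{k+2} for all x ∈ S if and only if the map f : S → S given by f(x) = x^k is a permutation matching of S. In particular, S is co-regular (x = x^3 for all x ∈ S) if and only if the identity map on S is a permutation matching. -/

import Mathlib

variable {S : Type*}

/-- `b` is an inverse of `a`: `a*b*a = a` and `b*a*b = b`. -/
def IsInverseOf [Semigroup S] (b a : S) : Prop := a * b * a = a ∧ b * a * b = b

/-- `invs a` is the set `V(a)` of inverses of `a`. -/
def invs [Semigroup S] (a : S) : Set S := {b | IsInverseOf b a}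

/-- `invsSet A` is `V(A) = ⋃ a ∈ A, V(a)`. -/
def invsSet [Semigroup S] (A : Set S) : Set S := ⋃ a ∈ A, invs a

/-- A semigroup is regular if every element has an inverse. -/
def IsRegularSemigroup (S : Type*) [Semigroup S] : Prop := ∀ a : S, ∃ b, IsInverseOf b a

/-- A permutation matching: a bijection sending each element to one of its inverses. -/
def IsPermMatching [Semigroup S] (f : S → S) : Prop :=
  Function.Bijective f ∧ ∀ a, f a ∈ invs a

def lSet [Semigroup S] (a : S) : Set S := insert a {x | ∃ s, s * a = x}
def rSet [Semigroup S] (a : S) : Set S := insert a {x | ∃ s, a * s = x}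
/-- Green's L relation. -/
def greenL [Semigroup S] (a b : S) : Prop := lSet a = lSet b
/-- Green's R relation. -/
def greenR [Semigroup S] (a b : S) : Prop := rSet a = rSet b
/-- Green's H relation. -/
def greenH [Semigroup S] (a b : S) : Prop := greenL a b ∧ greenR a b
/-- Green's D relation. -/
def greenD [Semigroup S] (a b : S) : Prop := ∃ c, greenL a c ∧ greenR c b
def dClass [Semigroup S] (a : S) : Set S := {b | greenD a b}
def lClass [Semigroup S] (a : S) : Set S := {b | greenL a b}
def rClass [Semigroup S] (a : S) : Set S := {b | greenR a b}

/-- `spow x n = x^(n+1)` (positive powers in a semigroup). -/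
def spow [Semigroup S] (x : S) : ℕ → S
  | 0 => x
  | n + 1 => spow x n * x

/-- `e` is an idempotent positive power of `x`; in a finite semigroup this
characterises `e = x^ω`. -/
def IsOmega [Semigroup S] (x e : S) : Prop := (∃ k : ℕ, e = spow x k) ∧ e * e = e

/-- `y = x^(ω-1)`: `y = x^m` for the least positive `m` with `x^(m+1)` idempotent
(in a finite semigroup `x^(m+1)` idempotent iff `x^(m+1) = x^ω`). Here `m = k+1`. -/
def IsOmegaMinusOne [Semigroup S] (x y : S) : Prop :=
  ∃ k : ℕ, y = spow x k ∧ spow x (k+1) * spow x (k+1) = spow x (k+1) ∧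
    ∀ j < k, ¬ (spow x (j+1) * spow x (j+1) = spow x (j+1))


lemma spow_mul_spow [Semigroup S] (x : S) (n m : ℕ) :
    spow x n * spow x m = spow x (n + m + 1) := by
  induction m with
  | zero => rfl
  | succ m ih =>
      show spow x n * (spow x m * x) = _
      rw [← mul_assoc, ih]; rfl

lemma spow_spow [Semigroup S] (x : S) (n m : ℕ) :
    spow (spow x n) m = spow x (n * m + n + m) := by
  induction m with
  | zero => simp [spow]
  | succ m ih =>
      show spow (spow x n) m * spow x n = _
      rw [ih, spow_mul_spow]; ring_nf

lemma spow_period [Semigroup S] {x : S} {k : ℕ} (h : x = spow x (k + 1)) (n : ℕ) :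
    spow x n = spow x (n + (k + 1)) := by
  induction n with
  | zero => rw [Nat.zero_add]; exact h
  | succ n ih =>
      show spow x n * x = _
      rw [ih]
      have : n + 1 + (k + 1) = n + (k + 1) + 1 := by omega
      rw [this]; rfl

lemma spow_period_mul [Semigroup S] {x : S} {k : ℕ} (h : x = spow x (k + 1)) (n m : ℕ) :
    spow x n = spow x (n + m * (k + 1)) := by
  induction m with
  | zero => simp
  | succ m ih =>
      rw [ih]
      have : n + (m + 1) * (k + 1) = n + m * (k + 1) + (k + 1) := by ring
      rw [this, ← spow_period h]

/-- Theorem 2.1(iv). A finite regular semigroup satisfies `x = x^(k+2)`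
(`k ≥ 1`) iff `x ↦ x^k` is a permutation matching; in particular it is co-regular
(`x = x^3`) iff the identity map is a permutation matching.
(Recall `spow x n = x^(n+1)`, so `x^(k+2) = spow x (k+1)` and `x^k = spow x (k-1)`.) -/
theorem stmt_9 (S : Type*) [Semigroup S] [Fintype S]
    (hreg : IsRegularSemigroup S) (k : ℕ) (hk : 1 ≤ k) :
    ((∀ x : S, x = spow x (k + 1)) ↔ IsPermMatching (fun x : S => spow x (k - 1))) ∧
    ((∀ x : S, x = x * x * x) ↔ IsPermMatching (id : S → S)) := by
  obtain ⟨k, rfl⟩ : ∃ k', k = k' + 1 := ⟨k - 1, (Nat.succ_pred_eq_of_pos hk).symm⟩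
  simp only [Nat.add_sub_cancel]
  constructor
  · constructor
    · intro h
      constructor
      · have hinv : Function.Involutive (fun x : S => spow x k) := by
          intro x
          simp only [spow_spow]
          have : k * k + k + k = 0 + k * (k + 1 + 1) := by ring
          rw [this, ← spow_period_mul (h x)]
          rfl
        exact hinv.bijective
      · intro a
        refine ⟨?_, ?_⟩
        · have : a * spow a k * a = spow a 0 * spow a k * spow a 0 := rfl
          rw [this, spow_mul_spow, spow_mul_spow]
          simpa using (h a).symm
        · have : spow a k * a * spow a k = spow a k * spow a 0 * spow a k := rfl
          rw [this, spow_mul_spow, spow_mul_spow]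
          have : k + 0 + 1 + k + 1 = k + 1 * (k + 1 + 1) := by ring
          rw [this, ← spow_period_mul (h a)]
    · rintro ⟨-, hm⟩ x
      have h1 := (hm x).1
      have : x * spow x k * x = spow x 0 * spow x k * spow x 0 := rfl
      rw [this, spow_mul_spow, spow_mul_spow] at h1
      simpa using h1.symm
  · constructor
    · intro h
      exact ⟨Function.bijective_id, fun a => ⟨(h a).symm, (h a).symm⟩⟩
    · rintro ⟨-, hm⟩ x
      exact ((hm x).1).symm
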